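/- Let $\tau \in M_{n\times n}(\mathbb{C})$ with $\mathrm{Im}\,\tau$ symmetric positive definite, and let $D \in GL(n,\mathbb{Z})$ satisfy $\mathrm{Im}\,\tau\, D = D^T \mathrm{Im}\,\tau^T$ and $\mathrm{Im}\,\tau\, D$ positive definite, and $A := \mathrm{Re}\,\tau\, D - D^T \mathrm{Re}\,\tau^T \in M_{n\times n}(\mathbb{Z})$. Let $\xi: \mathbb{Z}^n \to \mathbb{Z}/2$ satisfy $\xi(m_1+m_2) = \xi(m_1)+\xi(m_2) + m_1^T A m_2 \bmod 2$. For $k \in \mathbb{Z}^n$ define $\vartheta_{D,k}(z) = \sum_{m \in \mathbb{Z}^n} (-1)^{\xi(m)} e^{\pi i \langle D^{-1}k, A m\rangle} e^{\pi i \langle \tau D(m - D^{-1}k), m - D^{-1}k\rangle} e^{2\pi i \langle Dm - k, z\rangle}$. Then the series converges absolutely for every $z \in \mathbb{C}^n$, and satisfies $\vartheta_{D,k}(z + h) = \vartheta_{D,k}(z)$ for all $h \in \mathbb{Z}^n$ and $\vartheta_{D,k}(z + \tau^T h) = (-1)^{\xi(h)} e^{-\pi i \langle \tau D h, h\rangle}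 e^{-2\pi i \langle Dh, z\rangle} \vartheta_{D,k}(z)$ for all $h \in \mathbb{Z}^n$. -/

import Mathlib

open Matrix

section Helpers
variable {n : ℕ}

private lemma summable_int_exp_lin (a : ℝ) (ha : 0 < a) (b : ℝ) :
    Summable fun q : ℤ => Real.exp (-a * q ^ 2 + b * q) := by
  have him : ∀ r : ℝ, (Complex.I * (r : ℂ)).im = r := fun r => by simp [Complex.mul_im]
  have h := (summable_jacobiTheta₂_term_iff (Complex.I * ((-b / (2 * Real.pi) : ℝ) : ℂ))
    (Complex.I * ((a / Real.pi : ℝ) : ℂ))).2 (by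
      rw [him]; exact div_pos ha Real.pi_pos)
  have h2 := summable_norm_iff.2 h
  refine h2.congr fun q => ?_
  rw [norm_jacobiTheta₂_term, him, him]
  congr 1
  have hπ : (Real.pi : ℝ) ≠ 0 := Real.pi_ne_zero
  field_simp
  ring

private lemma summable_int_exp (a : ℝ) (ha : 0 < a) (b : ℝ) :
    Summable fun q : ℤ => Real.exp (-a * q ^ 2 + b * |q|) := by
  have h1 := summable_int_exp_lin a ha b
  have h2 := summable_int_exp_lin a ha (-b)
  refine Summable.of_nonneg_of_le (fun q => (Real.exp_pos _).le) (fun q => ?_) (h1.add h2)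
  rcases abs_choice (q : ℝ) with h | h <;> rw [Int.cast_abs, h]
  · exact le_add_of_nonneg_right (Real.exp_pos _).le
  · have e : -a * (q : ℝ) ^ 2 + b * (-(q : ℝ)) = -a * q ^ 2 + (-b) * q := by ring
    rw [e]
    exact le_add_of_nonneg_left (Real.exp_pos _).le

private lemma summable_pi_prod (n : ℕ) (f : ℤ → ℝ) (hf : Summable f) (h0 : ∀ q, 0 ≤ f q) :
    Summable fun m : Fin n → ℤ => ∏ i, f (m i) := by
  induction n with
  | zero => exact Summable.of_finite
  | succ n ih =>
      have hg0 : ∀ v : Fin n → ℤ, 0 ≤ ∏ i, f (v i) :=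
        fun v => Finset.prod_nonneg fun i _ => h0 _
      have key : Summable fun x : ℤ × (Fin n → ℤ) => f x.1 * ∏ i, f (x.2 i) := by
        apply Summable.mul_of_nonneg hf ih h0 hg0
      refine ((Fin.consEquiv (fun _ : Fin (n + 1) => ℤ)).summable_iff
        (f := fun m : Fin (n + 1) → ℤ => ∏ i, f (m i))).1 (key.congr fun x => ?_)
      simp [Fin.prod_univ_succ]

private lemma posdef_quadratic_bound {M : Matrix (Fin n) (Fin n) ℝ} (hM : M.PosDef) :
    ∃ c > 0, ∀ v : Fin n → ℝ, c * ∑ i, (v i) ^ 2 ≤ v ⬝ᵥ M.mulVec v := by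
  rcases Nat.eq_zero_or_pos n with hn | hn
  · refine ⟨1, one_pos, fun v => ?_⟩
    subst hn
    simp
  have hcont : Continuous fun v : Fin n → ℝ => v ⬝ᵥ M.mulVec v := by
    simp only [dotProduct, mulVec]
    apply continuous_finset_sum
    intro i _
    exact (continuous_apply i).mul
      (continuous_finset_sum _ fun j _ => continuous_const.mul (continuous_apply j))
  haveI : Nonempty (Fin n) := ⟨⟨0, hn⟩⟩
  have hsph : (Metric.sphere (0 : Fin n → ℝ) 1).Nonempty :=
    NormedSpace.sphere_nonempty.2 zero_le_one
  obtain ⟨v₀, hv₀s, hv₀min⟩ := (isCompact_sphere (0 : Fin n → ℝ) 1).exists_isMinOn hsph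
    hcont.continuousOn
  have hv₀norm : ‖v₀‖ = 1 := by simpa using hv₀s
  have hv₀ne : v₀ ≠ 0 := by intro h; rw [h] at hv₀norm; simp at hv₀norm
  have hc₀pos : 0 < v₀ ⬝ᵥ M.mulVec v₀ := by simpa using hM.dotProduct_mulVec_pos hv₀ne
  refine ⟨(v₀ ⬝ᵥ M.mulVec v₀) / n, div_pos hc₀pos (by exact_mod_cast hn), fun v => ?_⟩
  rcases eq_or_ne v 0 with rfl | hv
  · simp
  · have hnv : 0 < ‖v‖ := norm_pos_iff.2 hv
    have hws : ‖v‖⁻¹ • v ∈ Metric.sphere (0 : Fin n → ℝ) 1 := by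
      simp [norm_smul, abs_of_pos (inv_pos.2 hnv), inv_mul_cancel₀ hnv.ne']
    have hwq : v₀ ⬝ᵥ M.mulVec v₀ ≤ (‖v‖⁻¹ • v) ⬝ᵥ M.mulVec (‖v‖⁻¹ • v) := hv₀min hws
    have hvw : ‖v‖ • (‖v‖⁻¹ • v) = v := by
      rw [smul_smul, mul_inv_cancel₀ hnv.ne', one_smul]
    have hQ : (‖v‖ • (‖v‖⁻¹ • v)) ⬝ᵥ M.mulVec (‖v‖ • (‖v‖⁻¹ • v))
        = ‖v‖ ^ 2 * ((‖v‖⁻¹ • v) ⬝ᵥ M.mulVec (‖v‖⁻¹ • v)) := by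
      rw [mulVec_smul, smul_dotProduct, dotProduct_smul, smul_eq_mul, smul_eq_mul]
      ring
    have hsum : ∑ i, (v i) ^ 2 ≤ n * ‖v‖ ^ 2 := by
      have hb : ∀ i : Fin n, (v i) ^ 2 ≤ ‖v‖ ^ 2 := fun i => by
        have h1 := norm_le_pi_norm v i
        calc (v i) ^ 2 = |v i| ^ 2 := (sq_abs _).symm
        _ ≤ ‖v‖ ^ 2 := by apply pow_le_pow_left₀ (abs_nonneg _) (by simpa using h1)
      calc ∑ i, (v i) ^ 2 ≤ ∑ _i : Fin n, ‖v‖ ^ 2 := Finset.sum_le_sum fun i _ => hb i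
      _ = n * ‖v‖ ^ 2 := by simp [Finset.sum_const, mul_comm]
    have hnn : (0 : ℝ) < n := by exact_mod_cast hn
    calc (v₀ ⬝ᵥ M.mulVec v₀) / n * ∑ i, (v i) ^ 2
        ≤ (v₀ ⬝ᵥ M.mulVec v₀) / n * (n * ‖v‖ ^ 2) :=
          mul_le_mul_of_nonneg_left hsum (le_of_lt (div_pos hc₀pos hnn))
    _ = (v₀ ⬝ᵥ M.mulVec v₀) * ‖v‖ ^ 2 := by field_simp
    _ ≤ ‖v‖ ^ 2 * ((‖v‖⁻¹ • v) ⬝ᵥ M.mulVec (‖v‖⁻¹ • v)) := by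
          rw [mul_comm]
          exact mul_le_mul_of_nonneg_left hwq (by positivity)
    _ = (‖v‖ • (‖v‖⁻¹ • v)) ⬝ᵥ M.mulVec (‖v‖ • (‖v‖⁻¹ • v)) := hQ.symm
    _ = v ⬝ᵥ M.mulVec v := by rw [hvw]

private lemma dot_flip (S A : Matrix (Fin n) (Fin n) ℂ) (hSA : S - Sᵀ = A) (x y : Fin n → ℂ) :
    S.mulVec x ⬝ᵥ y = S.mulVec y ⬝ᵥ x - A.mulVec y ⬝ᵥ x := by
  have h1 : S.mulVec x ⬝ᵥ y = Sᵀ.mulVec y ⬝ᵥ x := by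
    rw [dotProduct_comm, dotProduct_mulVec, ← mulVec_transpose]
  rw [h1, show Sᵀ = S - A by rw [← hSA, sub_sub_cancel], sub_mulVec, sub_dotProduct]

private lemma dot_tT (τ DC : Matrix (Fin n) (Fin n) ℂ) (x y : Fin n → ℂ) :
    DC.mulVec x ⬝ᵥ τᵀ.mulVec y = (τ * DC).mulVec x ⬝ᵥ y := by
  rw [dotProduct_mulVec, vecMul_transpose, mulVec_mulVec]

private lemma key_dot (τ S A DC : Matrix (Fin n) (Fin n) ℂ) (p mC hC z : Fin n → ℂ)
    (hSA : S - Sᵀ = A) (hS : τ * DC = S) :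
    (p ⬝ᵥ A.mulVec mC + S.mulVec (mC - p) ⬝ᵥ (mC - p)
      + 2 * ((DC.mulVec mC - DC.mulVec p) ⬝ᵥ (z + τᵀ.mulVec hC)))
    - (p ⬝ᵥ A.mulVec (mC + hC) + S.mulVec (mC + hC - p) ⬝ᵥ (mC + hC - p)
      + 2 * ((DC.mulVec (mC + hC) - DC.mulVec p) ⬝ᵥ z))
    - (-(S.mulVec hC ⬝ᵥ hC) - 2 * (DC.mulVec hC ⬝ᵥ z))
    = -(mC ⬝ᵥ A.mulVec hC) := by
  have hA : ∀ x y : Fin n → ℂ, A.mulVec x ⬝ᵥ y = -(A.mulVec y ⬝ᵥ x) := by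
    intro x y
    have hAT : Aᵀ = -A := by rw [← hSA]; simp [transpose_sub]
    rw [dotProduct_comm, dotProduct_mulVec, ← mulVec_transpose, hAT, neg_mulVec, neg_dotProduct]
  simp only [mulVec_add, mulVec_sub, add_dotProduct, sub_dotProduct, dotProduct_add,
    dotProduct_sub, dot_tT τ DC _ _, hS]
  simp only [dotProduct_comm p (A.mulVec mC), dotProduct_comm p (A.mulVec hC),
    dotProduct_comm mC (A.mulVec hC)]
  linear_combination (dot_flip S A hSA mC hC) - (dot_flip S A hSA p hC) + hA hC mC - hA hC p
    - hA mC hC + hA p hC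

private lemma castVecC (B : Matrix (Fin n) (Fin n) ℤ) (x : Fin n → ℤ) :
    (B.map (Int.cast : ℤ → ℂ)).mulVec (fun i => (x i : ℂ)) = fun i => ((B.mulVec x) i : ℂ) := by
  funext i
  simp [mulVec, dotProduct, Matrix.map_apply]

private lemma castVecR (B : Matrix (Fin n) (Fin n) ℤ) (x : Fin n → ℤ) :
    (B.map (Int.cast : ℤ → ℝ)).mulVec (fun i => (x i : ℝ)) = fun i => ((B.mulVec x) i : ℝ) := by
  funext i
  simp [mulVec, dotProduct, Matrix.map_apply]

private lemma castDotC (x y : Fin n → ℤ) :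
    (fun i => (x i : ℂ)) ⬝ᵥ (fun i => (y i : ℂ)) = ((x ⬝ᵥ y : ℤ) : ℂ) := by
  simp [dotProduct]

private lemma im_dot_cast (S : Matrix (Fin n) (Fin n) ℂ) (x y : Fin n → ℝ) :
    (S.mulVec (fun i => (x i : ℂ)) ⬝ᵥ (fun i => (y i : ℂ))).im
      = (S.map Complex.im).mulVec x ⬝ᵥ y := by
  simp only [dotProduct, mulVec, Complex.im_sum, Matrix.map_apply]
  refine Finset.sum_congr rfl fun i _ => ?_
  rw [Complex.mul_im]
  simp [Complex.im_sum, Complex.re_sum, Finset.sum_mul, Complex.mul_im]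

private lemma im_dot_real_left (x : Fin n → ℝ) (z : Fin n → ℂ) :
    ((fun i => (x i : ℂ)) ⬝ᵥ z).im = x ⬝ᵥ fun i => (z i).im := by
  simp [dotProduct, Complex.im_sum]

private lemma map_im_mul_int (τ : Matrix (Fin n) (Fin n) ℂ) (D : Matrix (Fin n) (Fin n) ℤ) :
    (τ * D.map (Int.cast : ℤ → ℂ)).map Complex.im
      = τ.map Complex.im * D.map (Int.cast : ℤ → ℝ) := by
  ext i j
  simp [Matrix.mul_apply, Matrix.map_apply, Complex.im_sum]

private lemma re_pi_I_mul (w : ℂ) : ((Real.pi : ℂ) * Complex.I * w).re = -Real.pi * w.im := by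
  simp [Complex.mul_re]

private lemma neg_one_pow_exp (v : ℕ) :
    ((-1 : ℂ)) ^ v = Complex.exp ((Real.pi : ℂ) * Complex.I * v) := by
  rw [mul_comm, Complex.exp_nat_mul, Complex.exp_pi_mul_I]

end Helpers

/-- One term of the multivariate theta series `ϑ_{D,k}`. -/
noncomputable def thetaMultiTerm (n : ℕ) (τ : Matrix (Fin n) (Fin n) ℂ)
    (D : Matrix (Fin n) (Fin n) ℤ) (ξ : (Fin n → ℤ) → ZMod 2)
    (k : Fin n → ℤ) (z : Fin n → ℂ) (m : Fin n → ℤ) : ℂ :=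
  let DC : Matrix (Fin n) (Fin n) ℂ := D.map (Int.cast : ℤ → ℂ)
  let Reτ : Matrix (Fin n) (Fin n) ℂ := τ.map (fun x => (x.re : ℂ))
  let A : Matrix (Fin n) (Fin n) ℂ := Reτ * DC - DCᵀ * Reτᵀ
  let kC : Fin n → ℂ := fun i => (k i : ℂ)
  let p : Fin n → ℂ := DC⁻¹.mulVec kC
  let mC : Fin n → ℂ := fun i => (m i : ℂ)
  (-1 : ℂ) ^ ((ξ m).val) *
  Complex.exp (Real.pi * Complex.I * dotProduct p (A.mulVec mC)) *
  Complex.exp (Real.pi * Complex.I *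
    dotProduct ((τ * DC).mulVec (mC - p)) (mC - p)) *
  Complex.exp (2 * Real.pi * Complex.I * dotProduct (DC.mulVec mC - kC) z)

/-- The multivariate theta function
`ϑ_{D,k}(z) = ∑_{m ∈ ℤⁿ} (-1)^{ξ(m)} e^{πi⟨D⁻¹k, Am⟩}
  e^{πi⟨τD(m-D⁻¹k), m-D⁻¹k⟩} e^{2πi⟨Dm-k, z⟩}`. -/
noncomputable def thetaMulti (n : ℕ) (τ : Matrix (Fin n) (Fin n) ℂ)
    (D : Matrix (Fin n) (Fin n) ℤ) (ξ : (Fin n → ℤ) → ZMod 2)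
    (k : Fin n → ℤ) (z : Fin n → ℂ) : ℂ :=
  ∑' m : Fin n → ℤ, thetaMultiTerm n τ D ξ k z m

private lemma thetaMultiTerm_exp (n : ℕ) (τ : Matrix (Fin n) (Fin n) ℂ)
    (D : Matrix (Fin n) (Fin n) ℤ) (ξ : (Fin n → ℤ) → ZMod 2)
    (k : Fin n → ℤ) (z : Fin n → ℂ) (m : Fin n → ℤ) :
    thetaMultiTerm n τ D ξ k z m =
      Complex.exp ((Real.pi : ℂ) * Complex.I * (((ξ m).val : ℂ)
        + (D.map (Int.cast : ℤ → ℂ))⁻¹.mulVec (fun i => (k i : ℂ)) ⬝ᵥ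
            ((τ.map (fun x => (x.re : ℂ)) * D.map (Int.cast : ℤ → ℂ)
              - (D.map (Int.cast : ℤ → ℂ))ᵀ * (τ.map (fun x => (x.re : ℂ)))ᵀ).mulVec
              (fun i => (m i : ℂ)))
        + (τ * D.map (Int.cast : ℤ → ℂ)).mulVec
            ((fun i => (m i : ℂ)) - (D.map (Int.cast : ℤ → ℂ))⁻¹.mulVec (fun i => (k i : ℂ))) ⬝ᵥ
            ((fun i => (m i : ℂ)) - (D.map (Int.cast : ℤ → ℂ))⁻¹.mulVec (fun i => (k i : ℂ)))
        + 2 * (((D.map (Int.cast : ℤ → ℂ)).mulVec (fun i => (m i : ℂ)) - fun i => (k i : ℂ)) ⬝ᵥ z))) := by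
  simp only [thetaMultiTerm]
  rw [neg_one_pow_exp, ← Complex.exp_add, ← Complex.exp_add, ← Complex.exp_add]
  congr 1
  ring

/-- the multivariate theta series converges absolutely and satisfies
`ϑ_{D,k}(z+h) = ϑ_{D,k}(z)` and
`ϑ_{D,k}(z+τᵀh) = (-1)^{ξ(h)} e^{-πi⟨τDh,h⟩} e^{-2πi⟨Dh,z⟩} ϑ_{D,k}(z)` for `h ∈ ℤⁿ`. -/
theorem thetaMulti_quasi_periodicity
    (n : ℕ) (τ : Matrix (Fin n) (Fin n) ℂ) (D : Matrix (Fin n) (Fin n) ℤ)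
    (hD : IsUnit D.det)
    (hImSymm : (τ.map Complex.im).IsSymm)
    (hImPos : (τ.map Complex.im).PosDef)
    (hImD : τ.map Complex.im * D.map (Int.cast : ℤ → ℝ)
      = (D.map (Int.cast : ℤ → ℝ))ᵀ * (τ.map Complex.im)ᵀ)
    (hImDPos : (τ.map Complex.im * D.map (Int.cast : ℤ → ℝ)).PosDef)
    (AZ : Matrix (Fin n) (Fin n) ℤ)
    (hAZ : AZ.map (Int.cast : ℤ → ℝ) =
      τ.map Complex.re * D.map (Int.cast : ℤ → ℝ)
        - (D.map (Int.cast : ℤ → ℝ))ᵀ * (τ.map Complex.re)ᵀ)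
    (ξ : (Fin n → ℤ) → ZMod 2)
    (hξ : ∀ m₁ m₂ : Fin n → ℤ, ξ (m₁ + m₂) = ξ m₁ + ξ m₂ +
      ((dotProduct m₁ (AZ.mulVec m₂) : ℤ) : ZMod 2))
    (k : Fin n → ℤ) :
    (∀ z : Fin n → ℂ, Summable (thetaMultiTerm n τ D ξ k z)) ∧
    (∀ (h : Fin n → ℤ) (z : Fin n → ℂ),
      thetaMulti n τ D ξ k (z + fun i => (h i : ℂ)) = thetaMulti n τ D ξ k z) ∧
    (∀ (h : Fin n → ℤ) (z : Fin n → ℂ),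
      thetaMulti n τ D ξ k (z + τᵀ.mulVec (fun i => (h i : ℂ))) =
        (-1 : ℂ) ^ ((ξ h).val) *
        Complex.exp (-(Real.pi * Complex.I *
          dotProduct ((τ * D.map (Int.cast : ℤ → ℂ)).mulVec (fun i => (h i : ℂ)))
            (fun i => (h i : ℂ)))) *
        Complex.exp (-(2 * Real.pi * Complex.I *
          dotProduct ((D.map (Int.cast : ℤ → ℂ)).mulVec (fun i => (h i : ℂ))) z)) *
        thetaMulti n τ D ξ k z) := by
  classical
  -- invertibility over ℤ
  have hDu : IsUnit D := (Matrix.isUnit_iff_isUnit_det D).2 hD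
  obtain ⟨u, hu⟩ := hDu
  have hDE : D * (↑u⁻¹ : Matrix (Fin n) (Fin n) ℤ) = 1 := by rw [← hu]; exact u.mul_inv
  set E : Matrix (Fin n) (Fin n) ℤ := (↑u⁻¹ : Matrix (Fin n) (Fin n) ℤ) with hEdef
  have hmapmul : ∀ B C : Matrix (Fin n) (Fin n) ℤ, (B * C).map (Int.cast : ℤ → ℂ)
      = B.map (Int.cast : ℤ → ℂ) * C.map (Int.cast : ℤ → ℂ) := by
    intro B C
    ext i j
    simp [Matrix.mul_apply, Matrix.map_apply]
  have hDCE : D.map (Int.cast : ℤ → ℂ) * E.map (Int.cast : ℤ → ℂ) = 1 := by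
    rw [← hmapmul, hDE, Matrix.map_one _ Int.cast_zero Int.cast_one]
  have hinv : (D.map (Int.cast : ℤ → ℂ))⁻¹ = E.map (Int.cast : ℤ → ℂ) :=
    inv_eq_right_inv hDCE
  set pZ : Fin n → ℤ := E.mulVec k with hpZdef
  have hp : (D.map (Int.cast : ℤ → ℂ))⁻¹.mulVec (fun i => (k i : ℂ))
      = fun i => (pZ i : ℂ) := by rw [hinv, castVecC]
  have hDp : D.mulVec pZ = k := by rw [hpZdef, mulVec_mulVec, hDE, one_mulVec]
  have hkC : (fun i => (k i : ℂ))
      = (D.map (Int.cast : ℤ → ℂ)).mulVec (fun i => (pZ i : ℂ)) := by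
    rw [castVecC, hDp]
  -- A over ℂ equals cast of AZ
  have hACZ : τ.map (fun x => (x.re : ℂ)) * D.map (Int.cast : ℤ → ℂ)
      - (D.map (Int.cast : ℤ → ℂ))ᵀ * (τ.map (fun x => (x.re : ℂ)))ᵀ
      = AZ.map (Int.cast : ℤ → ℂ) := by
    ext i j
    have h2 := congrArg (fun M : Matrix (Fin n) (Fin n) ℝ => M i j) hAZ
    simp only [Matrix.sub_apply, Matrix.mul_apply, Matrix.map_apply, Matrix.transpose_apply] at h2 ⊢
    have h3 := congrArg (fun r : ℝ => (r : ℂ)) h2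
    push_cast at h3 ⊢
    exact h3.symm
  -- cast of hImD
  have hImDC : τ.map (fun x => ((x.im : ℝ) : ℂ)) * D.map (Int.cast : ℤ → ℂ)
      = (D.map (Int.cast : ℤ → ℂ))ᵀ * (τ.map (fun x => ((x.im : ℝ) : ℂ)))ᵀ := by
    ext i j
    have h2 := congrArg (fun M : Matrix (Fin n) (Fin n) ℝ => M i j) hImD
    simp only [Matrix.mul_apply, Matrix.map_apply, Matrix.transpose_apply] at h2 ⊢
    have h3 := congrArg (fun r : ℝ => (r : ℂ)) h2
    push_cast at h3 ⊢
    exact h3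
  -- τ = Re + I Im
  have hτsum : τ = τ.map (fun x => (x.re : ℂ)) + Complex.I • τ.map (fun x => ((x.im : ℝ) : ℂ)) := by
    ext i j
    simp only [Matrix.add_apply, Matrix.smul_apply, Matrix.map_apply, smul_eq_mul]
    rw [mul_comm]
    exact (Complex.re_add_im _).symm
  -- S - Sᵀ = A
  have hSA : (τ * D.map (Int.cast : ℤ → ℂ)) - (τ * D.map (Int.cast : ℤ → ℂ))ᵀ
      = AZ.map (Int.cast : ℤ → ℂ) := by
    rw [transpose_mul]
    rw [hτsum]
    simp only [add_mul, mul_add, transpose_add, transpose_smul, smul_mul_assoc, mul_smul_comm]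
    rw [hImDC, ← hACZ]
    abel
  have hsub : ∀ m : Fin n → ℤ, (D.map (Int.cast : ℤ → ℂ)).mulVec (fun i => (m i : ℂ))
      - (fun i => (k i : ℂ)) = fun i => (((D.mulVec m - k) i : ℤ) : ℂ) := by
    intro m
    rw [castVecC]
    funext i
    simp [Pi.sub_apply]
  refine ⟨?_, ?_, ?_⟩
  · -- Summability
    intro z
    obtain ⟨a, ha, hQ⟩ := posdef_quadratic_bound hImDPos
    set imz : Fin n → ℝ := fun i => (z i).im with himz
    set Wz : Fin n → ℝ := (D.map (Int.cast : ℤ → ℝ))ᵀ.mulVec imz with hWzdef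
    set b : ℝ := 2 * Real.pi * ‖Wz‖ with hbdef
    set f : ℤ → ℝ := fun q => Real.exp (-(Real.pi * a) * q ^ 2 + b * |q|) with hfdef
    have hfs : Summable f := summable_int_exp _ (by positivity) b
    have hprod : Summable fun m : Fin n → ℤ => ∏ i, f (m i) :=
      summable_pi_prod n f hfs fun q => (Real.exp_pos _).le
    have hshift : Summable fun m : Fin n → ℤ => ∏ i, f ((m - pZ) i) := by
      have h2 := ((Equiv.subRight pZ).summable_iff
        (f := fun v : Fin n → ℤ => ∏ i, f (v i))).2 hprod
      exact h2
    have hnorm : ∀ m : Fin n → ℤ, ‖thetaMultiTerm n τ D ξ k z m‖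
        = Real.exp (-Real.pi *
            (((τ.map Complex.im * D.map (Int.cast : ℤ → ℝ)).mulVec
                (fun i => ((m - pZ) i : ℝ)) ⬝ᵥ (fun i => ((m - pZ) i : ℝ)))
              + 2 * ((fun i => ((D.mulVec (m - pZ)) i : ℝ)) ⬝ᵥ imz))) := by
      intro m
      rw [thetaMultiTerm_exp, hp, hACZ]
      rw [Complex.norm_exp, re_pi_I_mul]
      congr 1
      have he1 : ((fun i => (pZ i : ℂ)) ⬝ᵥ (AZ.map (Int.cast : ℤ → ℂ)).mulVec
          (fun i => (m i : ℂ))) = ((pZ ⬝ᵥ AZ.mulVec m : ℤ) : ℂ) := by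
        rw [castVecC, castDotC]
      have hmp : ((fun i => (m i : ℂ)) - fun i => (pZ i : ℂ))
          = fun i => ((((m - pZ) i : ℤ) : ℝ) : ℂ) := by
        funext i
        push_cast [Pi.sub_apply]
        ring
      have he3 : (D.map (Int.cast : ℤ → ℂ)).mulVec (fun i => (m i : ℂ)) - (fun i => (k i : ℂ))
          = fun i => ((((D.mulVec (m - pZ)) i : ℤ) : ℝ) : ℂ) := by
        rw [hsub m, show D.mulVec m - k = D.mulVec (m - pZ) by rw [mulVec_sub, hDp]]
        funext i
        push_cast
        ring
      rw [he1, hmp, he3]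
      simp only [Complex.add_im, Complex.natCast_im, Complex.intCast_im, zero_add,
        Complex.mul_im, Complex.re_ofNat, Complex.im_ofNat, Complex.ofReal_re, zero_mul, add_zero,
        mul_zero]
      rw [im_dot_cast, map_im_mul_int, im_dot_real_left]
    refine Summable.of_norm (Summable.of_nonneg_of_le (fun m => norm_nonneg _) (fun m => ?_) hshift)
    rw [hnorm m, ← Real.exp_sum]
    apply Real.exp_le_exp.2
    set v : Fin n → ℝ := fun i => ((m - pZ) i : ℝ) with hvdef
    have hQ1 : a * ∑ i, (v i) ^ 2 ≤ v ⬝ᵥ (τ.map Complex.im * D.map (Int.cast : ℤ → ℝ)).mulVec v :=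
      hQ v
    have hlin : (fun i => ((D.mulVec (m - pZ)) i : ℝ)) ⬝ᵥ imz = Wz ⬝ᵥ v := by
      rw [show (fun i => ((D.mulVec (m - pZ)) i : ℝ))
          = (D.map (Int.cast : ℤ → ℝ)).mulVec v from (castVecR D (m - pZ)).symm]
      rw [dotProduct_comm, dotProduct_mulVec, ← mulVec_transpose]
    have hWb : ∀ i, |Wz i| ≤ ‖Wz‖ := fun i => by simpa using norm_le_pi_norm Wz i
    have hA1 : -Real.pi * ((τ.map Complex.im * D.map (Int.cast : ℤ → ℝ)).mulVec v ⬝ᵥ v)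
        ≤ ∑ i, -(Real.pi * a) * (v i) ^ 2 := by
      have h2 := mul_le_mul_of_nonpos_left hQ1 (neg_nonpos.2 Real.pi_pos.le)
      calc -Real.pi * ((τ.map Complex.im * D.map (Int.cast : ℤ → ℝ)).mulVec v ⬝ᵥ v)
          = -Real.pi * (v ⬝ᵥ (τ.map Complex.im * D.map (Int.cast : ℤ → ℝ)).mulVec v) := by
            rw [dotProduct_comm]
      _ ≤ -Real.pi * (a * ∑ i, (v i) ^ 2) := h2
      _ = ∑ i, -(Real.pi * a) * (v i) ^ 2 := by
            rw [Finset.mul_sum, Finset.mul_sum]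
            exact Finset.sum_congr rfl fun i _ => by ring
    have hA2 : -Real.pi * (2 * (Wz ⬝ᵥ v)) ≤ ∑ i, b * |v i| := by
      rw [show -Real.pi * (2 * (Wz ⬝ᵥ v)) = ∑ i, -2 * Real.pi * (Wz i * v i) by
        simp only [dotProduct, Finset.mul_sum]
        exact Finset.sum_congr rfl fun i _ => by ring]
      refine Finset.sum_le_sum fun i _ => ?_
      have h1 : -(Wz i * v i) ≤ |Wz i| * |v i| := (neg_le_abs _).trans (abs_mul _ _).le
      have h2 : |Wz i| * |v i| ≤ ‖Wz‖ * |v i| :=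
        mul_le_mul_of_nonneg_right (hWb i) (abs_nonneg _)
      have hπ := Real.pi_pos
      nlinarith [abs_nonneg (v i)]
    calc -Real.pi * ((τ.map Complex.im * D.map (Int.cast : ℤ → ℝ)).mulVec v ⬝ᵥ v
            + 2 * ((fun i => ((D.mulVec (m - pZ)) i : ℝ)) ⬝ᵥ imz))
        = -Real.pi * ((τ.map Complex.im * D.map (Int.cast : ℤ → ℝ)).mulVec v ⬝ᵥ v)
            + -Real.pi * (2 * (Wz ⬝ᵥ v)) := by rw [hlin]; ring
    _ ≤ (∑ i, -(Real.pi * a) * (v i) ^ 2) + ∑ i, b * |v i| := add_le_add hA1 hA2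
    _ = ∑ i, (-(Real.pi * a) * (v i) ^ 2 + b * |v i|) := by rw [← Finset.sum_add_distrib]
    _ = ∑ i, (-(Real.pi * a) * (((m - pZ) i : ℤ) : ℝ) ^ 2 + b * ((|(m - pZ) i| : ℤ) : ℝ)) :=
          Finset.sum_congr rfl fun i _ => by push_cast; ring
  · -- periodicity in ℤⁿ
    intro h z
    unfold thetaMulti
    apply tsum_congr
    intro m
    rw [thetaMultiTerm_exp, thetaMultiTerm_exp]
    rw [Complex.exp_eq_exp_iff_exists_int]
    refine ⟨(D.mulVec m - k) ⬝ᵥ h, ?_⟩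
    have hdot2 : ((D.map (Int.cast : ℤ → ℂ)).mulVec (fun i => (m i : ℂ)) - fun i => (k i : ℂ))
        ⬝ᵥ (fun i => (h i : ℂ)) = (((D.mulVec m - k) ⬝ᵥ h : ℤ) : ℂ) := by
      rw [hsub m, castDotC]
    rw [dotProduct_add]
    linear_combination (2 * (Real.pi : ℂ) * Complex.I) * hdot2
  · -- quasi-periodicity
    intro h z
    unfold thetaMulti
    have key3 : ∀ m : Fin n → ℤ,
        thetaMultiTerm n τ D ξ k (z + τᵀ.mulVec (fun i => (h i : ℂ))) m
        = ((-1 : ℂ) ^ ((ξ h).val) *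
            Complex.exp (-(Real.pi * Complex.I *
              ((τ * D.map (Int.cast : ℤ → ℂ)).mulVec (fun i => (h i : ℂ)) ⬝ᵥ
                (fun i => (h i : ℂ))))) *
            Complex.exp (-(2 * Real.pi * Complex.I *
              ((D.map (Int.cast : ℤ → ℂ)).mulVec (fun i => (h i : ℂ)) ⬝ᵥ z)))) *
          thetaMultiTerm n τ D ξ k z (m + h) := by
      intro m
      have hmh : (fun i => (((m + h) : Fin n → ℤ) i : ℂ))
          = (fun i => (m i : ℂ)) + fun i => (h i : ℂ) := by
        funext i
        push_cast [Pi.add_apply]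
        ring
      rw [thetaMultiTerm_exp, thetaMultiTerm_exp, hp, hmh, hkC, hACZ]
      rw [neg_one_pow_exp, ← Complex.exp_add, ← Complex.exp_add, ← Complex.exp_add]
      rw [Complex.exp_eq_exp_iff_exists_int]
      have hX2 : (2 : ℤ) ∣ (((ξ (m + h)).val : ℤ) - ((ξ m).val : ℤ) - ((ξ h).val : ℤ)
          - m ⬝ᵥ AZ.mulVec h) := by
        apply (ZMod.intCast_zmod_eq_zero_iff_dvd _ 2).1
        push_cast
        rw [hξ m h]
        simp only [ZMod.natCast_val, ZMod.cast_id]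
        ring
      obtain ⟨j, hj⟩ := hX2
      refine ⟨-(((ξ h).val : ℤ) + m ⬝ᵥ AZ.mulVec h + j), ?_⟩
      have hdot := key_dot τ (τ * D.map (Int.cast : ℤ → ℂ)) (AZ.map (Int.cast : ℤ → ℂ))
        (D.map (Int.cast : ℤ → ℂ)) (fun i => (pZ i : ℂ)) (fun i => (m i : ℂ))
        (fun i => (h i : ℂ)) z hSA rfl
      have hAt : (fun i => (m i : ℂ)) ⬝ᵥ (AZ.map (Int.cast : ℤ → ℂ)).mulVec
          (fun i => (h i : ℂ)) = ((m ⬝ᵥ AZ.mulVec h : ℤ) : ℂ) := by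
        rw [castVecC, castDotC]
      have hjC : (((ξ (m + h)).val : ℤ) : ℂ) - (((ξ m).val : ℤ) : ℂ) - (((ξ h).val : ℤ) : ℂ)
          - ((m ⬝ᵥ AZ.mulVec h : ℤ) : ℂ) = 2 * (j : ℂ) := by
        exact_mod_cast congrArg (fun x : ℤ => (x : ℂ)) hj
      push_cast
      push_cast at hjC
      linear_combination ((Real.pi : ℂ) * Complex.I) * hdot
        - ((Real.pi : ℂ) * Complex.I) * hAt - ((Real.pi : ℂ) * Complex.I) * hjC
    rw [tsum_congr key3, tsum_mul_left]
    have hre : ∑' m : Fin n → ℤ, thetaMultiTerm n τ D ξ k z (m + h)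
        = ∑' m : Fin n → ℤ, thetaMultiTerm n τ D ξ k z m := by
      have h2 := (Equiv.addRight h).tsum_eq (fun m => thetaMultiTerm n τ D ξ k z m)
      simpa [Equiv.coe_addRight] using h2
    rw [hre]
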